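/- Let L_{n,m} be the lollipop graph (n ≥ 3, m ≥ 2) and let k be any positive integer with k ≥ n. Then L_{n,m} has a harmonious coloring with k colors if and only if the graph obtained from the complete graph K_k by deleting all edges among a fixed set of n vertices contains a trail with m vertices (m−1 edges, all distinct) starting at one of those n vertices. Consequently h(L_{n,m}) is the minimum such k. -/

import Mathlib

/-- A coloring `c` is harmonious for `G` if it is a proper vertex coloring and
every unordered pair of colors appears on the endpoints of at most one edge. -/
def IsHarmonious {V α : Type*} (G : SimpleGraph V) (c : V → α) : Prop :=
  (∀ ⦃u v : V⦄, G.Adj u v → c u ≠ c v) ∧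
  ∀ e ∈ G.edgeSet, ∀ e' ∈ G.edgeSet, Sym2.map c e = Sym2.map c e' → e = e'

/-- The harmonious chromatic number: the least `k` such that `G` admits a
harmonious coloring with `k` colors. -/
noncomputable def harmoniousChromaticNumber {V : Type*} [Fintype V] (G : SimpleGraph V) : ℕ :=
  sInf {k | ∃ c : V → Fin k, IsHarmonious G c}


/-- The lollipop graph `L_{n,m}`: a complete graph on the vertices `inl i`,
a path `inl 0, inr 0, inr 1, …, inr (m-2)` with `m` vertices attached at the
clique vertex `inl 0`. -/
def lollipopGraph (n m : ℕ) : SimpleGraph (Fin n ⊕ Fin (m - 1)) :=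
  SimpleGraph.fromRel (fun x y =>
    match x, y with
    | .inl i, .inl j => i ≠ j
    | .inl i, .inr p => i.val = 0 ∧ p.val = 0
    | .inr p, .inr q => q.val = p.val + 1
    | _, _ => False)

/-- The complete graph on `Fin k` with all edges among the first `n`
vertices removed. -/
def completeMinusClique (n k : ℕ) : SimpleGraph (Fin k) where
  Adj x y := x ≠ y ∧ ¬(x.val < n ∧ y.val < n)
  symm := by
    constructor
    intro x y ⟨h1, h2⟩
    exact ⟨h1.symm, fun h => h2 ⟨h.2, h.1⟩⟩
  loopless := by constructor; intro x ⟨h, _⟩; exact h rfl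


open SimpleGraph


open SimpleGraph

def walkOfFun {V : Type*} (G : SimpleGraph V) :
    ∀ (L : ℕ) (f : ℕ → V), (∀ j < L, G.Adj (f j) (f (j+1))) → G.Walk (f 0) (f L)
  | 0, _, _ => .nil
  | (L+1), f, h => .cons (h 0 (Nat.succ_pos L))
      (walkOfFun G L (fun j => f (j+1)) (fun j hj => h (j+1) (by omega)))

theorem walkOfFun_edges {V : Type*} (G : SimpleGraph V) :
    ∀ (L : ℕ) (f : ℕ → V) (h : ∀ j < L, G.Adj (f j) (f (j+1))),
      (walkOfFun G L f h).edges = (List.range L).map (fun j => s(f j, f (j+1)))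
  | 0, _, _ => rfl
  | (L+1), f, h => by
    rw [walkOfFun, Walk.edges_cons, walkOfFun_edges G L, List.range_succ_eq_map]
    simp [Function.comp]

theorem walkOfFun_length {V : Type*} (G : SimpleGraph V) (L : ℕ) (f : ℕ → V)
    (h : ∀ j < L, G.Adj (f j) (f (j+1))) : (walkOfFun G L f h).length = L := by
  rw [← Walk.length_edges, walkOfFun_edges]; simp

theorem edges_getElem {V : Type*} {G : SimpleGraph V} {u v : V} (w : G.Walk u v) :
    ∀ (j : ℕ) (hj : j < w.length),
      w.edges[j]'(by rw [Walk.length_edges]; exact hj) = s(w.getVert j, w.getVert (j+1)) := by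
  induction w with
  | nil => intro j hj; simp at hj
  | cons h p ih =>
    intro j hj
    cases j with
    | zero => simp [Walk.getVert_zero, Walk.getVert_cons_succ]
    | succ j =>
      have h1 : (Walk.cons h p).edges[j+1]'(by rw [Walk.length_edges]; exact hj) = p.edges[j]'(by rw [Walk.length_edges]; simpa using hj) := by
        simp [Walk.edges_cons]
      rw [h1, Walk.getVert_cons_succ, Walk.getVert_cons_succ]
      exact ih j (by simpa using hj)

theorem trail_index_inj {V : Type*} {G : SimpleGraph V} {u v : V} {w : G.Walk u v}
    (hw : w.IsTrail) {j j' : ℕ} (hj : j < w.length) (hj' : j' < w.length)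
    (h : s(w.getVert j, w.getVert (j+1)) = s(w.getVert j', w.getVert (j'+1))) : j = j' := by
  have hnd := hw.edges_nodup
  rw [← edges_getElem w j hj, ← edges_getElem w j' hj'] at h
  exact (hnd.getElem_inj_iff).mp h

theorem lollipop_adj_inl_inl {n m : ℕ} (i j : Fin n) :
    (lollipopGraph n m).Adj (.inl i) (.inl j) ↔ i ≠ j := by
  rw [lollipopGraph, SimpleGraph.fromRel_adj]
  constructor
  · rintro ⟨h1, h2 | h2⟩
    · exact h2
    · exact fun h => h2 h.symm
  · intro h; exact ⟨by simp [h], Or.inl h⟩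

theorem lollipop_adj_inl_inr {n m : ℕ} (i : Fin n) (p : Fin (m-1)) :
    (lollipopGraph n m).Adj (.inl i) (.inr p) ↔ i.val = 0 ∧ p.val = 0 := by
  rw [lollipopGraph, SimpleGraph.fromRel_adj]
  constructor
  · rintro ⟨h1, h2 | h2⟩
    · exact h2
    · exact h2.elim
  · intro h; exact ⟨by simp, Or.inl h⟩

theorem lollipop_adj_inr_inr {n m : ℕ} (p q : Fin (m-1)) :
    (lollipopGraph n m).Adj (.inr p) (.inr q) ↔ q.val = p.val + 1 ∨ p.val = q.val + 1 := by
  rw [lollipopGraph, SimpleGraph.fromRel_adj]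
  constructor
  · rintro ⟨h1, h2 | h2⟩
    · exact Or.inl h2
    · exact Or.inr h2
  · rintro (h | h)
    · exact ⟨by simp; omega, Or.inl h⟩
    · exact ⟨by simp; omega, Or.inr h⟩

theorem lollipop_adj_cases {n m : ℕ} {x y : Fin n ⊕ Fin (m-1)}
    (h : (lollipopGraph n m).Adj x y) :
    (∃ i j : Fin n, i ≠ j ∧ x = .inl i ∧ y = .inl j) ∨
    (∃ (i : Fin n) (p : Fin (m-1)), i.val = 0 ∧ p.val = 0 ∧
      (x = .inl i ∧ y = .inr p ∨ x = .inr p ∧ y = .inl i)) ∨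
    (∃ p q : Fin (m-1), q.val = p.val + 1 ∧
      (x = .inr p ∧ y = .inr q ∨ x = .inr q ∧ y = .inr p)) := by
  match x, y with
  | .inl i, .inl j =>
    exact Or.inl ⟨i, j, (lollipop_adj_inl_inl i j).mp h, rfl, rfl⟩
  | .inl i, .inr p =>
    obtain ⟨h1, h2⟩ := (lollipop_adj_inl_inr i p).mp h
    exact Or.inr (Or.inl ⟨i, p, h1, h2, Or.inl ⟨rfl, rfl⟩⟩)
  | .inr p, .inl i =>
    obtain ⟨h1, h2⟩ := (lollipop_adj_inl_inr i p).mp h.symm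
    exact Or.inr (Or.inl ⟨i, p, h1, h2, Or.inr ⟨rfl, rfl⟩⟩)
  | .inr p, .inr q =>
    rcases (lollipop_adj_inr_inr p q).mp h with h1 | h1
    · exact Or.inr (Or.inr ⟨p, q, h1, Or.inl ⟨rfl, rfl⟩⟩)
    · exact Or.inr (Or.inr ⟨q, p, h1, Or.inr ⟨rfl, rfl⟩⟩)

open SimpleGraph in
theorem lollipop_backward (n m k : ℕ) (hn : 3 ≤ n) (hm : 2 ≤ m) (hk : n ≤ k)
    (u v : Fin k) (w : (completeMinusClique n k).Walk u v)
    (hw : w.IsTrail) (hu : u.val < n) (hlen : w.length = m - 1) :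
    ∃ c : (Fin n ⊕ Fin (m - 1)) → Fin k, IsHarmonious (lollipopGraph n m) c := by
  have hk0 : 0 < k := by omega
  set z : Fin k := ⟨0, hk0⟩ with hz
  set τ : Equiv.Perm (Fin k) := Equiv.swap z u with hτdef
  set c : (Fin n ⊕ Fin (m-1)) → Fin k :=
    Sum.elim (fun i => τ ⟨i.val, by omega⟩) (fun p => w.getVert (p.val + 1)) with hcdef
  have hτ : ∀ x : Fin k, (τ x).val < n ↔ x.val < n := by
    intro x
    rw [hτdef, Equiv.swap_apply_def]
    split_ifs with h1 h2
    · have hx : x.val = 0 := by rw [h1]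
      exact ⟨fun _ => by omega, fun _ => hu⟩
    · exact ⟨fun _ => h2 ▸ hu, fun _ => by show (0:ℕ) < n; omega⟩
    · exact Iff.rfl
  have hτinj : Function.Injective τ := Equiv.injective τ
  have hLpos : 0 < w.length := by omega
  have hadj' : ∀ j, j < w.length →
      (completeMinusClique n k).Adj (w.getVert j) (w.getVert (j+1)) :=
    fun j hj => w.adj_getVert_succ hj
  have hne : ∀ j, j < w.length → w.getVert j ≠ w.getVert (j+1) :=
    fun j hj => (hadj' j hj).1
  have hnb : ∀ j, j < w.length →
      ¬((w.getVert j).val < n ∧ (w.getVert (j+1)).val < n) :=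
    fun j hj => (hadj' j hj).2
  -- key injectivity on clique colors
  have ckey : ∀ a b : Fin n, c (.inl a) = c (.inl b) → a = b := by
    intro a b hab
    have h1 : τ ⟨a.val, by omega⟩ = τ ⟨b.val, by omega⟩ := hab
    have h2 := hτinj h1
    have h3 := congrArg Fin.val h2
    exact Fin.ext h3
  have hc0 : ∀ i : Fin n, i.val = 0 → c (.inl i) = w.getVert 0 := by
    intro i hi
    show τ ⟨i.val, by omega⟩ = _
    have : (⟨i.val, by omega⟩ : Fin k) = z := Fin.ext hi
    rw [this, Equiv.swap_apply_left, w.getVert_zero]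
  have hcliqlt : ∀ i : Fin n, (c (.inl i)).val < n := by
    intro i
    show (τ ⟨i.val, by omega⟩).val < n
    rw [hτ]
    exact i.2
  refine ⟨c, ?_, ?_⟩
  · -- proper
    intro x y hxy
    rcases lollipop_adj_cases hxy with ⟨i, j, hij, rfl, rfl⟩ |
      ⟨i, p, hi, hp, (⟨rfl, rfl⟩ | ⟨rfl, rfl⟩)⟩ | ⟨p, q, hpq, (⟨rfl, rfl⟩ | ⟨rfl, rfl⟩)⟩
    · exact fun h => hij (ckey i j h)
    · rw [hc0 i hi]
      show w.getVert 0 ≠ w.getVert (p.val + 1)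
      rw [hp]
      exact hne 0 hLpos
    · rw [hc0 i hi]
      show w.getVert (p.val + 1) ≠ w.getVert 0
      rw [hp]
      exact (hne 0 hLpos).symm
    · show w.getVert (p.val + 1) ≠ w.getVert (q.val + 1)
      have hb : p.val + 1 < w.length := by have := q.2; omega
      have := hne (p.val + 1) hb
      rwa [show p.val + 1 + 1 = q.val + 1 by omega] at this
    · show w.getVert (q.val + 1) ≠ w.getVert (p.val + 1)
      have hb : p.val + 1 < w.length := by have := q.2; omega
      have := (hne (p.val + 1) hb).symm
      rwa [show p.val + 1 + 1 = q.val + 1 by omega] at this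
  · -- harmonious
    -- canonical path vertex function
    have hn0 : (0:ℕ) < n := by omega
    set g : ℕ → (Fin n ⊕ Fin (m-1)) :=
      fun j => if j = 0 then .inl ⟨0, hn0⟩ else .inr ⟨min (j-1) (m-2), by omega⟩ with hgdef
    have hgc : ∀ j, j ≤ m - 1 → c (g j) = w.getVert j := by
      intro j hj
      cases j with
      | zero =>
        show c (if 0 = 0 then _ else _) = _
        rw [if_pos rfl]
        exact hc0 _ rfl
      | succ j' =>
        show c (if j' + 1 = 0 then _ else _) = _
        rw [if_neg (by omega)]
        show w.getVert (min (j'+1-1) (m-2) + 1) = w.getVert (j' + 1)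
        congr 1
        omega
    -- classification of edges
    have hclass : ∀ x y : Fin n ⊕ Fin (m-1), (lollipopGraph n m).Adj x y →
        (∃ i j : Fin n, i ≠ j ∧ s(x, y) = s(Sum.inl i, Sum.inl j)) ∨
        (∃ jdx, jdx < m - 1 ∧ s(x, y) = s(g jdx, g (jdx+1))) := by
      intro x y hxy
      rcases lollipop_adj_cases hxy with ⟨i, j, hij, rfl, rfl⟩ |
        ⟨i, p, hi, hp, (⟨rfl, rfl⟩ | ⟨rfl, rfl⟩)⟩ | ⟨p, q, hpq, (⟨rfl, rfl⟩ | ⟨rfl, rfl⟩)⟩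
      · exact Or.inl ⟨i, j, hij, rfl⟩
      · refine Or.inr ⟨0, by omega, ?_⟩
        have h1 : (Sum.inl i : Fin n ⊕ Fin (m-1)) = g 0 := by
          rw [hgdef]; simp only [if_pos rfl]
          exact congrArg Sum.inl (Fin.ext hi)
        have h2 : (Sum.inr p : Fin n ⊕ Fin (m-1)) = g 1 := by
          rw [hgdef]; simp only [if_neg (by omega : (1:ℕ) ≠ 0)]
          exact congrArg Sum.inr (Fin.ext (by first | (simp; omega) | simp | omega))
        rw [h1, h2]
      · refine Or.inr ⟨0, by omega, ?_⟩
        have h1 : (Sum.inl i : Fin n ⊕ Fin (m-1)) = g 0 := by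
          rw [hgdef]; simp only [if_pos rfl]
          exact congrArg Sum.inl (Fin.ext hi)
        have h2 : (Sum.inr p : Fin n ⊕ Fin (m-1)) = g 1 := by
          rw [hgdef]; simp only [if_neg (by omega : (1:ℕ) ≠ 0)]
          exact congrArg Sum.inr (Fin.ext (by first | (simp; omega) | simp | omega))
        rw [h1, h2, Sym2.eq_swap]
      · refine Or.inr ⟨p.val + 1, by have := q.2; omega, ?_⟩
        have h1 : (Sum.inr p : Fin n ⊕ Fin (m-1)) = g (p.val + 1) := by
          rw [hgdef]; simp only [if_neg (by omega : p.val + 1 ≠ 0)]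
          exact congrArg Sum.inr (Fin.ext (by have hq2 := q.2; have hp2 := p.2; first | (simp; omega) | simp | omega))
        have h2 : (Sum.inr q : Fin n ⊕ Fin (m-1)) = g (p.val + 2) := by
          rw [hgdef]; simp only [if_neg (by omega : p.val + 2 ≠ 0)]
          exact congrArg Sum.inr (Fin.ext (by have hq2 := q.2; have hp2 := p.2; first | (simp; omega) | simp | omega))
        rw [h1, h2]
      · refine Or.inr ⟨p.val + 1, by have := q.2; omega, ?_⟩
        have h1 : (Sum.inr p : Fin n ⊕ Fin (m-1)) = g (p.val + 1) := by
          rw [hgdef]; simp only [if_neg (by omega : p.val + 1 ≠ 0)]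
          exact congrArg Sum.inr (Fin.ext (by have hq2 := q.2; have hp2 := p.2; first | (simp; omega) | simp | omega))
        have h2 : (Sum.inr q : Fin n ⊕ Fin (m-1)) = g (p.val + 2) := by
          rw [hgdef]; simp only [if_neg (by omega : p.val + 2 ≠ 0)]
          exact congrArg Sum.inr (Fin.ext (by have hq2 := q.2; have hp2 := p.2; first | (simp; omega) | simp | omega))
        rw [h1, h2, Sym2.eq_swap]
    have hmapg : ∀ jdx, jdx < m - 1 →
        Sym2.map c s(g jdx, g (jdx+1)) = s(w.getVert jdx, w.getVert (jdx+1)) := by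
      intro jdx hjdx
      rw [Sym2.map_pair_eq, hgc jdx (by omega), hgc (jdx+1) (by omega)]
    intro e he e' he'
    induction e using Sym2.ind with | _ x y =>
    induction e' using Sym2.ind with | _ x' y' =>
    intro hmeq
    rcases hclass x y (((lollipopGraph n m).mem_edgeSet.mp he)) with ⟨i, j, hij, hxy⟩ | ⟨jdx, hjdx, hxy⟩ <;>
      rcases hclass x' y' (((lollipopGraph n m).mem_edgeSet.mp he')) with ⟨i', j', hij', hxy'⟩ | ⟨jdx', hjdx', hxy'⟩
    · rw [hxy, hxy'] at hmeq ⊢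
      rw [Sym2.map_pair_eq, Sym2.map_pair_eq, Sym2.eq_iff] at hmeq
      rw [Sym2.eq_iff]
      rcases hmeq with ⟨h1, h2⟩ | ⟨h1, h2⟩
      · exact Or.inl ⟨congrArg Sum.inl (ckey _ _ h1), congrArg Sum.inl (ckey _ _ h2)⟩
      · exact Or.inr ⟨congrArg Sum.inl (ckey _ _ h1), congrArg Sum.inl (ckey _ _ h2)⟩
    · exfalso
      rw [hxy, hxy'] at hmeq
      rw [Sym2.map_pair_eq, hmapg jdx' hjdx', Sym2.eq_iff] at hmeq
      have hb : jdx' < w.length := by omega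
      rcases hmeq with ⟨h1, h2⟩ | ⟨h1, h2⟩
      · exact hnb jdx' hb ⟨h1 ▸ hcliqlt i, h2 ▸ hcliqlt j⟩
      · exact hnb jdx' hb ⟨h2 ▸ hcliqlt j, h1 ▸ hcliqlt i⟩
    · exfalso
      rw [hxy, hxy'] at hmeq
      rw [hmapg jdx hjdx, Sym2.map_pair_eq, Sym2.eq_iff] at hmeq
      have hb : jdx < w.length := by omega
      rcases hmeq with ⟨h1, h2⟩ | ⟨h1, h2⟩
      · exact hnb jdx hb ⟨by rw [h1]; exact hcliqlt i', by rw [h2]; exact hcliqlt j'⟩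
      · exact hnb jdx hb ⟨by rw [h1]; exact hcliqlt j', by rw [h2]; exact hcliqlt i'⟩
    · rw [hxy, hxy'] at hmeq ⊢
      rw [hmapg jdx hjdx, hmapg jdx' hjdx'] at hmeq
      have : jdx = jdx' := trail_index_inj hw (by omega) (by omega) hmeq
      rw [this]

open SimpleGraph in
theorem lollipop_forward (n m k : ℕ) (hn : 3 ≤ n) (hm : 2 ≤ m) (hk : n ≤ k)
    (c : (Fin n ⊕ Fin (m - 1)) → Fin k) (hc : IsHarmonious (lollipopGraph n m) c) :
    ∃ (u v : Fin k) (w : (completeMinusClique n k).Walk u v),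
      w.IsTrail ∧ u.val < n ∧ w.length = m - 1 := by
  classical
  obtain ⟨hc1, hc2⟩ := hc
  have hn0 : (0:ℕ) < n := by omega
  have cinj : Function.Injective (fun i : Fin n => c (.inl i)) := by
    intro i j hij
    by_contra hne
    exact hc1 ((lollipop_adj_inl_inl i j).mpr hne) hij
  set S : Finset (Fin k) := Finset.image (fun i : Fin n => c (.inl i)) Finset.univ with hS
  have hScard : S.card = n := by
    rw [hS, Finset.card_image_of_injective _ cinj, Finset.card_univ, Fintype.card_fin]
  have hmemS : ∀ x, x ∈ S ↔ ∃ i : Fin n, c (.inl i) = x := by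
    intro x; rw [hS]; simp
  have cardp : Fintype.card {x : Fin k // x ∈ S} = n := by
    rw [Fintype.card_coe]; exact hScard
  have cardq : Fintype.card {x : Fin k // x.val < n} = n := by
    have e : {x : Fin k // x.val < n} ≃ Fin n :=
      ⟨fun x => ⟨x.1.val, x.2⟩, fun i => ⟨⟨i.val, by omega⟩, i.2⟩,
        fun x => rfl, fun i => rfl⟩
    rw [Fintype.card_congr e, Fintype.card_fin]
  have eqv : {x : Fin k // x ∈ S} ≃ {x : Fin k // x.val < n} :=
    Fintype.equivOfCardEq (by rw [cardp, cardq])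
  set σ : Equiv.Perm (Fin k) := eqv.extendSubtype with hσdef
  have hσ1 : ∀ x ∈ S, (σ x).val < n := fun x hx => eqv.extendSubtype_mem x hx
  have hσ2 : ∀ x : Fin k, (σ x).val < n → x ∈ S := by
    intro x hx
    by_contra hxS
    exact eqv.extendSubtype_not_mem x hxS hx
  have hσinj : Function.Injective σ := Equiv.injective σ
  have hm2 : ∀ j : ℕ, min j (m-2) < m - 1 := by intro j; omega
  set g : ℕ → (Fin n ⊕ Fin (m-1)) :=
    fun j => if j = 0 then .inl ⟨0, hn0⟩ else .inr ⟨min (j-1) (m-2), hm2 _⟩ with hgdef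
  have hg0 : g 0 = .inl ⟨0, hn0⟩ := rfl
  have hgs : ∀ j : ℕ, g (j+1) = .inr ⟨min j (m-2), hm2 j⟩ := fun j => rfl
  have hgadj : ∀ j, j < m - 1 → (lollipopGraph n m).Adj (g j) (g (j+1)) := by
    intro j hj
    cases j with
    | zero =>
      rw [hg0, hgs 0]
      exact (lollipop_adj_inl_inr _ _).mpr ⟨rfl, by simp⟩
    | succ j' =>
      rw [hgs j', hgs (j'+1)]
      refine (lollipop_adj_inr_inr _ _).mpr (Or.inl ?_)
      simp only [Fin.val_mk]
      omega
  have hgedge : ∀ j j', j < m - 1 → j' < m - 1 →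
      s(g j, g (j+1)) = s(g j', g (j'+1)) → j = j' := by
    intro j j' hj hj' hjj
    rw [Sym2.eq_iff] at hjj
    rcases hjj with ⟨h1, h2⟩ | ⟨h1, h2⟩
    · cases j with
      | zero =>
        cases j' with
        | zero => rfl
        | succ b => rw [hg0, hgs b] at h1; exact absurd h1 (by simp)
      | succ a =>
        cases j' with
        | zero => rw [hg0, hgs a] at h1; exact absurd h1 (by simp)
        | succ b =>
          rw [hgs a, hgs b] at h1
          simp only [Sum.inr.injEq, Fin.mk.injEq] at h1
          omega
    · exfalso
      cases j with
      | zero =>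
        rw [hg0, hgs j'] at h1
        exact absurd h1 (by simp)
      | succ a =>
        cases j' with
        | zero =>
          rw [hg0, hgs (a+1)] at h2
          exact absurd h2 (by simp)
        | succ b =>
          rw [hgs a, hgs (b+1)] at h1
          rw [hgs (a+1), hgs b] at h2
          simp only [Sum.inr.injEq, Fin.mk.injEq] at h1 h2
          omega
  have hkey : ∀ (x : Fin n ⊕ Fin (m-1)) (p : Fin (m-1)),
      (lollipopGraph n m).Adj x (.inr p) → ¬(c x ∈ S ∧ c (.inr p) ∈ S) := by
    rintro x p hadj ⟨hx, hp⟩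
    obtain ⟨i, hi⟩ := (hmemS _).mp hp
    obtain ⟨i', hi'⟩ := (hmemS _).mp hx
    have hne : i' ≠ i := by
      intro h
      subst h
      exact hc1 hadj (hi'.symm.trans hi)
    have hadj2 : (lollipopGraph n m).Adj (.inl i') (.inl i) := (lollipop_adj_inl_inl _ _).mpr hne
    have hmeq : Sym2.map c s(x, Sum.inr p) = Sym2.map c s(Sum.inl i', Sum.inl i) := by
      rw [Sym2.map_pair_eq, Sym2.map_pair_eq, hi, hi']
    have := hc2 _ ((lollipopGraph n m).mem_edgeSet.mpr hadj) _
      ((lollipopGraph n m).mem_edgeSet.mpr hadj2) hmeq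
    rw [Sym2.eq_iff] at this
    rcases this with ⟨_, h2⟩ | ⟨_, h2⟩ <;> exact absurd h2 (by simp)
  set f : ℕ → Fin k := fun j => σ (c (g j)) with hfdef
  have hfadj : ∀ j, j < m - 1 → (completeMinusClique n k).Adj (f j) (f (j+1)) := by
    intro j hj
    constructor
    · intro h
      exact hc1 (hgadj j hj) (hσinj h)
    · rintro ⟨h1, h2⟩
      have hx1 : c (g j) ∈ S := hσ2 _ h1
      have hx2 : c (g (j+1)) ∈ S := hσ2 _ h2
      refine hkey (g j) ⟨min j (m-2), hm2 j⟩ ?_ ⟨hx1, ?_⟩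
      · rw [← hgs j]; exact hgadj j hj
      · rw [← hgs j]; exact hx2
  refine ⟨f 0, f (m-1), walkOfFun _ (m-1) f hfadj, ?_, ?_, walkOfFun_length _ _ _ _⟩
  · rw [Walk.isTrail_def, walkOfFun_edges]
    refine List.Nodup.map_on ?_ List.nodup_range
    intro j hj j' hj' hjj
    rw [List.mem_range] at hj hj'
    have hjj2 : Sym2.map σ s(c (g j), c (g (j+1))) = Sym2.map σ s(c (g j'), c (g (j'+1))) := by
      rw [Sym2.map_pair_eq, Sym2.map_pair_eq]; exact hjj
    have hjj3 := Sym2.map.injective hσinj hjj2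
    have hjj4 : Sym2.map c s(g j, g (j+1)) = Sym2.map c s(g j', g (j'+1)) := by
      rw [Sym2.map_pair_eq, Sym2.map_pair_eq]; exact hjj3
    have := hc2 _ ((lollipopGraph n m).mem_edgeSet.mpr (hgadj j hj)) _
      ((lollipopGraph n m).mem_edgeSet.mpr (hgadj j' hj')) hjj4
    exact hgedge j j' hj hj' this
  · refine hσ1 _ ?_
    rw [hmemS]
    exact ⟨⟨0, hn0⟩, by rw [hg0]⟩

theorem harmonious_lollipop (n m : ℕ) (hn : 3 ≤ n) (hm : 2 ≤ m) :
    (∀ k : ℕ, n ≤ k →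
      ((∃ c : (Fin n ⊕ Fin (m - 1)) → Fin k, IsHarmonious (lollipopGraph n m) c) ↔
        (∃ (u v : Fin k) (w : (completeMinusClique n k).Walk u v),
          w.IsTrail ∧ u.val < n ∧ w.length = m - 1))) ∧
    harmoniousChromaticNumber (lollipopGraph n m) =
      sInf {k : ℕ | n ≤ k ∧
        ∃ (u v : Fin k) (w : (completeMinusClique n k).Walk u v),
          w.IsTrail ∧ u.val < n ∧ w.length = m - 1} := by
  have hle : ∀ k : ℕ, (∃ c : (Fin n ⊕ Fin (m - 1)) → Fin k,
      IsHarmonious (lollipopGraph n m) c) → n ≤ k := by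
    rintro k ⟨c, hc1, _⟩
    have cinj : Function.Injective (fun i : Fin n => c (.inl i)) := by
      intro i j hij
      by_contra hne
      exact hc1 ((lollipop_adj_inl_inl i j).mpr hne) hij
    have := Fintype.card_le_of_injective _ cinj
    simpa using this
  constructor
  · intro k hk
    constructor
    · rintro ⟨c, hc⟩
      exact lollipop_forward n m k hn hm hk c hc
    · rintro ⟨u, v, w, hw, hu, hlen⟩
      exact lollipop_backward n m k hn hm hk u v w hw hu hlen
  · unfold harmoniousChromaticNumber
    congr 1
    ext k
    simp only [Set.mem_setOf_eq]
    constructor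
    · rintro ⟨c, hc⟩
      have hk : n ≤ k := hle k ⟨c, hc⟩
      exact ⟨hk, lollipop_forward n m k hn hm hk c hc⟩
    · rintro ⟨hk, u, v, w, hw, hu, hlen⟩
      exact lollipop_backward n m k hn hm hk u v w hw hu hlen
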